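/- Let Γ be a finite connected cubic G-vertex-transitive graph and let N be an abelian normal subgroup of G such that 3 divides the order of the stabilizer N_v of some vertex v in N. Then Γ is isomorphic to the complete bipartite graph K_{3,3}. -/

import Mathlib

/- STATEMENT 6:
Let Γ be a finite connected cubic G-vertex-transitive graph and let N be an abelian
normal subgroup of G such that 3 divides |N_v| for some vertex v. Then Γ ≅ K_{3,3}. -/

namespace Stmt6

set_option linter.unusedSectionVars false

section Aux

variable {V : Type} [Fintype V] {Γ : SimpleGraph V}

lemma aux_triple_apply (n : Equiv.Perm V) (hn3 : n ^ 3 = 1) (y : V) :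
    n (n (n y)) = y := by
  have := congrArg (fun σ : Equiv.Perm V => σ y) hn3
  simpa [pow_succ, Equiv.Perm.mul_apply] using this

lemma aux_distinct3 (n : Equiv.Perm V) (hn3 : n ^ 3 = 1) {y : V} (hy : n y ≠ y) :
    y ≠ n y ∧ y ≠ n (n y) ∧ n y ≠ n (n y) := by
  refine ⟨fun h => hy h.symm, fun h => ?_, fun h => hy (n.injective h).symm⟩
  have h3 := aux_triple_apply n hn3 y
  apply hy
  calc n y = n (n (n y)) := by rw [← h]
  _ = y := h3

lemma aux_fix_all {w : V} (hcub : (Γ.neighborSet w).ncard = 3) (n : Equiv.Perm V)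
    (hn3 : n ^ 3 = 1) (hw : n w = w)
    (hpres : ∀ u z : V, Γ.Adj u z → Γ.Adj (n u) (n z))
    {x : V} (hx : Γ.Adj w x) (hfx : n x = x) {y : V} (hy : Γ.Adj w y) : n y = y := by
  by_contra hny
  obtain ⟨d1, d2, d3⟩ := aux_distinct3 n hn3 hny
  have hmy : y ∈ Γ.neighborSet w := hy
  have hmny : n y ∈ Γ.neighborSet w := by
    have := hpres w y hy; rwa [hw] at this
  have hmnny : n (n y) ∈ Γ.neighborSet w := by
    have := hpres w (n y) hmny; rwa [hw] at this
  have hmx : x ∈ Γ.neighborSet w := hx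
  have hxy : x ≠ y := fun h => hny (h ▸ hfx)
  have hxny : x ≠ n y := by
    intro h
    apply d3
    rw [← h, hfx, h]
  have hxnny : x ≠ n (n y) := by
    intro h
    have : n x = y := by rw [h]; exact aux_triple_apply n hn3 y
    rw [hfx] at this
    exact hxy this
  have hsub : ({x, y, n y, n (n y)} : Set V) ⊆ Γ.neighborSet w := by
    intro z hz
    rcases hz with rfl | rfl | rfl | rfl <;> assumption
  have hle : ({x, y, n y, n (n y)} : Set V).ncard ≤ 3 := by
    rw [← hcub]
    exact Set.ncard_le_ncard hsub (Set.toFinite _)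
  have h4 : ({x, y, n y, n (n y)} : Set V).ncard = 4 := by
    rw [Set.ncard_insert_of_notMem (by simp [hxy, hxny, hxnny]),
      Set.ncard_insert_of_notMem (by simp [d1, d2]),
      Set.ncard_insert_of_notMem (by simp [d3]), Set.ncard_singleton]
  omega

lemma aux_nbr_eq {w : V} (hcub : (Γ.neighborSet w).ncard = 3) (n : Equiv.Perm V)
    (hn3 : n ^ 3 = 1) (hw : n w = w)
    (hpres : ∀ u z : V, Γ.Adj u z → Γ.Adj (n u) (n z))
    {a : V} (ha : Γ.Adj w a) (hna : n a ≠ a) :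
    Γ.neighborSet w = {a, n a, n (n a)} := by
  obtain ⟨d1, d2, d3⟩ := aux_distinct3 n hn3 hna
  have h1 : Γ.Adj w (n a) := by have := hpres w a ha; rwa [hw] at this
  have h2 : Γ.Adj w (n (n a)) := by have := hpres w (n a) h1; rwa [hw] at this
  symm
  apply Set.eq_of_subset_of_ncard_le
  · intro z hz
    rcases hz with rfl | rfl | rfl <;> assumption
  · rw [hcub, Set.ncard_insert_of_notMem (by simp [d1, d2]),
      Set.ncard_insert_of_notMem (by simp [d3]), Set.ncard_singleton]
  · exact Set.toFinite _

lemma aux_vec3_inj {x0 x1 x2 : V} (h01 : x0 ≠ x1) (h02 : x0 ≠ x2) (h12 : x1 ≠ x2) :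
    Function.Injective (![x0, x1, x2] : Fin 3 → V) := by
  intro i j hij
  fin_cases i <;> fin_cases j <;> simp_all

lemma aux_walk_closed (S : Set V) (hS : ∀ x ∈ S, ∀ y, Γ.Adj x y → y ∈ S)
    {u w : V} (p : Γ.Walk u w) : u ∈ S → w ∈ S := by
  induction p with
  | nil => exact id
  | cons h p ih => exact fun hu => ih (hS _ hu _ h)

lemma aux_eq_one_of_fix_edge (hconn : Γ.Connected)
    (hcub : ∀ w : V, (Γ.neighborSet w).ncard = 3) (n : Equiv.Perm V)
    (hn3 : n ^ 3 = 1) (hpres : ∀ u z : V, Γ.Adj u z → Γ.Adj (n u) (n z))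
    {w x : V} (hwx : Γ.Adj w x) (hw : n w = w) (hx : n x = x) : n = 1 := by
  set S : Set V := {y | n y = y ∧ ∀ z, Γ.Adj y z → n z = z} with hSdef
  have hwS : w ∈ S := ⟨hw, fun z hz => aux_fix_all (hcub w) n hn3 hw hpres hwx hx hz⟩
  have hstep : ∀ y ∈ S, ∀ z, Γ.Adj y z → z ∈ S := by
    intro y hy z hz
    have hzfix : n z = z := hy.2 z hz
    exact ⟨hzfix, fun u hu => aux_fix_all (hcub z) n hn3 hzfix hpres hz.symm hy.1 hu⟩
  ext y
  obtain ⟨p⟩ := hconn.preconnected w y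
  exact (aux_walk_closed S hstep p hwS).1

end Aux


theorem stmt6 {V : Type} [Fintype V] (Γ : SimpleGraph V)
    (hconn : Γ.Connected)
    (hcubic : ∀ v : V, (Γ.neighborSet v).ncard = 3)
    (G : Subgroup (Equiv.Perm V))
    (hAut : ∀ g ∈ G, ∀ u v : V, Γ.Adj (g u) (g v) ↔ Γ.Adj u v)
    (hTrans : ∀ u v : V, ∃ g ∈ G, g u = v)
    (N : Subgroup (Equiv.Perm V)) (hNG : N ≤ G)
    (hNnormal : ∀ g ∈ G, ∀ n ∈ N, g * n * g⁻¹ ∈ N)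
    (hNab : ∀ a ∈ N, ∀ b ∈ N, a * b = b * a)
    (v : V)
    (hdvd : 3 ∣ Nat.card ↥(N ⊓ MulAction.stabilizer (Equiv.Perm V) v)) :
    Nonempty (Γ ≃g completeBipartiteGraph (Fin 3) (Fin 3)) := by
  classical
  haveI : Fact (Nat.Prime 3) := ⟨by norm_num⟩
  obtain ⟨x, hx⟩ := exists_prime_orderOf_dvd_card'
    (G := ↥(N ⊓ MulAction.stabilizer (Equiv.Perm V) v)) 3 hdvd
  set n : Equiv.Perm V := (x : Equiv.Perm V) with hndef
  have hord : orderOf n = 3 := by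
    rw [← hx]
    exact orderOf_injective (N ⊓ MulAction.stabilizer (Equiv.Perm V) v).subtype
      (Subgroup.subtype_injective _) x
  have hn3 : n ^ 3 = 1 := by rw [← hord]; exact pow_orderOf_eq_one n
  have hn1 : n ≠ 1 := by
    intro h
    rw [h, orderOf_one] at hord
    omega
  have hx2 := x.2
  rw [Subgroup.mem_inf] at hx2
  have hnN : n ∈ N := hx2.1
  have hnv : n v = v := by
    have := hx2.2
    rwa [MulAction.mem_stabilizer_iff, Equiv.Perm.smul_def] at this
  have hnG : n ∈ G := hNG hnN
  have hpres : ∀ g, g ∈ G → ∀ u z : V, Γ.Adj u z → Γ.Adj (g u) (g z) :=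
    fun g hg u z h => (hAut g hg u z).mpr h
  obtain ⟨a, ha⟩ := Set.nonempty_of_ncard_ne_zero (s := Γ.neighborSet v)
    (by rw [hcubic v]; omega)
  have hva : Γ.Adj v a := ha
  have hna : n a ≠ a := fun h =>
    hn1 (aux_eq_one_of_fix_edge hconn hcubic n hn3 (hpres n hnG) hva hnv h)
  obtain ⟨g, hgG, hgv⟩ := hTrans v a
  set m : Equiv.Perm V := g * n * g⁻¹ with hmdef
  have hmN : m ∈ N := hNnormal g hgG n hnN
  have hmG : m ∈ G := hNG hmN
  have hginv : g⁻¹ a = v := by rw [← hgv]; exact g.symm_apply_apply v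
  have hma : m a = a := by
    rw [hmdef]
    simp only [Equiv.Perm.mul_apply]
    rw [hginv, hnv, hgv]
  have hm3 : m ^ 3 = 1 := by
    rw [hmdef, conj_pow, hn3]
    group
  have hm1 : m ≠ 1 := by
    intro h
    apply hn1
    have h2 : n = g⁻¹ * m * g := by rw [hmdef]; group
    rw [h2, h]
    group
  have hmv : m v ≠ v := fun h =>
    hm1 (aux_eq_one_of_fix_edge hconn hcubic m hm3 (hpres m hmG) hva h hma)
  have hcomm : ∀ z : V, m (n z) = n (m z) := by
    intro z
    have hc := hNab m hmN n hnN
    calc m (n z) = (m * n) z := rfl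
    _ = (n * m) z := by rw [hc]
    _ = n (m z) := rfl
  have hNv : Γ.neighborSet v = {a, n a, n (n a)} :=
    aux_nbr_eq (hcubic v) n hn3 hnv (hpres n hnG) hva hna
  have hNa : Γ.neighborSet a = {v, m v, m (m v)} :=
    aux_nbr_eq (hcubic a) m hm3 hma (hpres m hmG) hva.symm hmv
  -- pointwise fixing
  have hmna : m (n a) = n a := by rw [hcomm, hma]
  have hmnna : m (n (n a)) = n (n a) := by rw [hcomm, hmna]
  have hnmv : n (m v) = m v := by rw [← hcomm, hnv]
  have hnmmv : n (m (m v)) = m (m v) := by rw [← hcomm, hnmv]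
  have hmR : ∀ y ∈ ({a, n a, n (n a)} : Set V), m y = y := by
    intro y hy
    rcases hy with rfl | rfl | rfl
    exacts [hma, hmna, hmnna]
  have hnL : ∀ y ∈ ({v, m v, m (m v)} : Set V), n y = y := by
    intro y hy
    rcases hy with rfl | rfl | rfl
    exacts [hnv, hnmv, hnmmv]
  have hvR : ∀ y ∈ ({a, n a, n (n a)} : Set V), Γ.Adj v y := by
    intro y hy
    rw [← hNv] at hy
    exact hy
  have haL : ∀ y ∈ ({v, m v, m (m v)} : Set V), Γ.Adj a y := by
    intro y hy
    rw [← hNa] at hy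
    exact hy
  have hLR : ∀ x' ∈ ({v, m v, m (m v)} : Set V), ∀ y ∈ ({a, n a, n (n a)} : Set V),
      Γ.Adj x' y := by
    intro x' hx' y hy
    have h0 : Γ.Adj v y := hvR y hy
    have hmy := hmR y hy
    rcases hx' with rfl | rfl | rfl
    · exact h0
    · have := hpres m hmG v y h0; rwa [hmy] at this
    · have h1 := hpres m hmG v y h0
      rw [hmy] at h1
      have h2 := hpres m hmG (m v) y h1
      rwa [hmy] at h2
  have hdisj : ∀ x', x' ∈ ({v, m v, m (m v)} : Set V) →
      x' ∉ ({a, n a, n (n a)} : Set V) :=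
    fun x' hxL hxR => Γ.loopless.irrefl x' (hLR x' hxL x' hxR)
  -- neighborhoods of L-elements are exactly R and vice versa
  have keyv : ∀ y, Γ.Adj v y → y ∈ ({a, n a, n (n a)} : Set V) := by
    intro y hy
    rw [← hNv]
    exact hy
  have keya : ∀ y, Γ.Adj a y → y ∈ ({v, m v, m (m v)} : Set V) := by
    intro y hy
    rw [← hNa]
    exact hy
  have hΓL : ∀ x' ∈ ({v, m v, m (m v)} : Set V), ∀ y, Γ.Adj x' y →
      y ∈ ({a, n a, n (n a)} : Set V) := by
    have hm_invG : m⁻¹ ∈ G := inv_mem hmG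
    have step1 : ∀ y, Γ.Adj (m v) y → y ∈ ({a, n a, n (n a)} : Set V) := by
      intro y hy
      have h1 := hpres m⁻¹ hm_invG (m v) y hy
      rw [Equiv.Perm.coe_inv, Equiv.symm_apply_apply] at h1
      have h2 := keyv _ h1
      have h3 := hmR _ h2
      rw [Equiv.apply_symm_apply] at h3
      rw [h3]; exact h2
    have step2 : ∀ y, Γ.Adj (m (m v)) y → y ∈ ({a, n a, n (n a)} : Set V) := by
      intro y hy
      have h1 := hpres m⁻¹ hm_invG (m (m v)) y hy
      rw [Equiv.Perm.coe_inv, Equiv.symm_apply_apply] at h1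
      have h2 := step1 _ h1
      have h3 := hmR _ h2
      rw [Equiv.apply_symm_apply] at h3
      rw [h3]; exact h2
    intro x' hx' y hy
    rcases hx' with rfl | rfl | rfl
    exacts [keyv y hy, step1 y hy, step2 y hy]
  have hΓR : ∀ x' ∈ ({a, n a, n (n a)} : Set V), ∀ y, Γ.Adj x' y →
      y ∈ ({v, m v, m (m v)} : Set V) := by
    have hn_invG : n⁻¹ ∈ G := inv_mem hnG
    have step1 : ∀ y, Γ.Adj (n a) y → y ∈ ({v, m v, m (m v)} : Set V) := by
      intro y hy
      have h1 := hpres n⁻¹ hn_invG (n a) y hy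
      rw [Equiv.Perm.coe_inv, Equiv.symm_apply_apply] at h1
      have h2 := keya _ h1
      have h3 := hnL _ h2
      rw [Equiv.apply_symm_apply] at h3
      rw [h3]; exact h2
    have step2 : ∀ y, Γ.Adj (n (n a)) y → y ∈ ({v, m v, m (m v)} : Set V) := by
      intro y hy
      have h1 := hpres n⁻¹ hn_invG (n (n a)) y hy
      rw [Equiv.Perm.coe_inv, Equiv.symm_apply_apply] at h1
      have h2 := step1 _ h1
      have h3 := hnL _ h2
      rw [Equiv.apply_symm_apply] at h3
      rw [h3]; exact h2
    intro x' hx' y hy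
    rcases hx' with rfl | rfl | rfl
    exacts [keya y hy, step1 y hy, step2 y hy]
  have hcover : ∀ u : V,
      u ∈ (({v, m v, m (m v)} : Set V) ∪ ({a, n a, n (n a)} : Set V)) := by
    intro u
    have hclosed : ∀ x' ∈ (({v, m v, m (m v)} : Set V) ∪ ({a, n a, n (n a)} : Set V)),
        ∀ y, Γ.Adj x' y →
        y ∈ (({v, m v, m (m v)} : Set V) ∪ ({a, n a, n (n a)} : Set V)) := by
      intro x' hx' y hy
      rcases hx' with h | h
      · exact Or.inr (hΓL x' h y hy)
      · exact Or.inl (hΓR x' h y hy)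
    obtain ⟨p⟩ := hconn.preconnected v u
    exact aux_walk_closed _ hclosed p (Or.inl (Or.inl rfl))
  obtain ⟨dR1, dR2, dR3⟩ := aux_distinct3 n hn3 hna
  obtain ⟨dL1, dL2, dL3⟩ := aux_distinct3 m hm3 hmv
  set f : Fin 3 ⊕ Fin 3 → V := Sum.elim ![v, m v, m (m v)] ![a, n a, n (n a)] with hfdef
  have hfL : ∀ i : Fin 3, f (Sum.inl i) ∈ ({v, m v, m (m v)} : Set V) := by
    intro i
    fin_cases i <;> simp [hfdef]
  have hfR : ∀ j : Fin 3, f (Sum.inr j) ∈ ({a, n a, n (n a)} : Set V) := by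
    intro j
    fin_cases j <;> simp [hfdef]
  have hsurj : Function.Surjective f := by
    intro u
    rcases hcover u with h | h
    · rcases h with rfl | rfl | rfl
      exacts [⟨Sum.inl 0, by simp [hfdef]⟩, ⟨Sum.inl 1, by simp [hfdef]⟩,
        ⟨Sum.inl 2, by simp [hfdef]⟩]
    · rcases h with rfl | rfl | rfl
      exacts [⟨Sum.inr 0, by simp [hfdef]⟩, ⟨Sum.inr 1, by simp [hfdef]⟩,
        ⟨Sum.inr 2, by simp [hfdef]⟩]
  have hinj : Function.Injective f := by
    intro p q h
    rcases p with i | i <;> rcases q with j | j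
    · simp only [hfdef, Sum.elim_inl] at h
      exact congrArg Sum.inl (aux_vec3_inj dL1 dL2 dL3 h)
    · exact absurd (hfR j) (fun hh => hdisj _ (h ▸ hfL i) hh)
    · exact absurd (hfR i) (fun hh => hdisj _ (h.symm ▸ hfL j) hh)
    · simp only [hfdef, Sum.elim_inr] at h
      exact congrArg Sum.inr (aux_vec3_inj dR1 dR2 dR3 h)
  have hbij : Function.Bijective f := ⟨hinj, hsurj⟩
  have hadj : ∀ p q, Γ.Adj (f p) (f q) ↔
      (completeBipartiteGraph (Fin 3) (Fin 3)).Adj p q := by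
    intro p q
    rcases p with i | i <;> rcases q with j | j
    · exact iff_of_false (fun h => hdisj _ (hfL j) (hΓL _ (hfL i) _ h)) (by simp)
    · exact iff_of_true (hLR _ (hfL i) _ (hfR j)) (by simp)
    · exact iff_of_true ((hLR _ (hfL j) _ (hfR i)).symm) (by simp)
    · exact iff_of_false (fun h => hdisj _ (hΓR _ (hfR i) _ h) (hfR j)) (by simp)
  exact ⟨SimpleGraph.Iso.symm ⟨Equiv.ofBijective f hbij, hadj _ _⟩⟩

end Stmt6
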